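/- Let Γ = Γ_1 *_Σ Γ_2 be a non-trivial amalgamated free product. Then: (i) for each i = 1,2 and every g ∈ Γ \ Γ_i there exists s ∈ Γ_i such that gΓ_ig⁻¹ ∩ Γ_i ⊆ sΣs⁻¹ (in particular Γ_i is almost malnormal in Γ when Σ is finite); (ii) for every g ∈ Γ there exists s ∈ Γ_1 such that gΓ_2g⁻¹ ∩ Γ_1 ⊆ sΣs⁻¹. -/

import Mathlib

/-- `C` is a Følner sequence for the action of `G` on `X` given by `π`. -/
def IsFolnerSeq {G X : Type*} [Group G] (π : G →* Equiv.Perm X) (C : ℕ → Set X) : Prop :=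
  (∀ n, (C n).Finite ∧ (C n).Nonempty) ∧
    ∀ g : G, Filter.Tendsto
      (fun n => ((symmDiff (C n) (π g '' C n)).ncard : ℝ) / (C n).ncard)
      Filter.atTop (nhds 0)

/-- The action of `G` on `X` given by `π` is amenable (admits a Følner sequence). -/
def IsAmenableAction {G X : Type*} [Group G] (π : G →* Equiv.Perm X) : Prop :=
  ∃ C : ℕ → Set X, IsFolnerSeq π C

/-- The action given by `π` has infinite orbits. -/
def HasInfiniteOrbits {G X : Type*} [Group G] (π : G →* Equiv.Perm X) : Prop :=
  ∀ x : X, {y : X | ∃ g : G, π g x = y}.Infinite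

/-- The action given by `π` is transitive. -/
def IsTransitiveAction {G X : Type*} [Group G] (π : G →* Equiv.Perm X) : Prop :=
  ∀ x y : X, ∃ g : G, π g x = y

/-- The action given by `π` is almost free: every non-trivial element has finitely many
fixed points. -/
def IsAlmostFreeAction {G X : Type*} [Group G] (π : G →* Equiv.Perm X) : Prop :=
  ∀ g : G, g ≠ 1 → {x : X | π g x = x}.Finite

/-- The class 𝒜 of countable groups admitting a faithful, transitive and amenable action
on an infinite countable set. -/
def InClassA (G : Type*) [Group G] : Prop :=
  ∃ (X : Type) (_ : Countable X) (_ : Infinite X) (π : G →* Equiv.Perm X),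
    Function.Injective π ∧ IsTransitiveAction π ∧ IsAmenableAction π

/-- The class 𝒜_ℱ of countable groups admitting an amenable, almost free action with
infinite orbits on a countable set. -/
def InClassAF (G : Type*) [Group G] : Prop :=
  ∃ (X : Type) (_ : Countable X) (π : G →* Equiv.Perm X),
    IsAmenableAction π ∧ IsAlmostFreeAction π ∧ HasInfiniteOrbits π
section AmalgamSetup

universe u

variable (Γ₁ Γ₂ : Type u) [Group Γ₁] [Group Γ₂]

/-- The `Bool`-indexed family consisting of the two groups `Γ₁` and `Γ₂`. -/
def AmalgFam : Bool → Type u := fun b => cond b Γ₁ Γ₂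

instance : ∀ b, Group (AmalgFam Γ₁ Γ₂ b)
  | true => ‹Group Γ₁›
  | false => ‹Group Γ₂›

variable {Γ₁ Γ₂} {S : Type u} [Group S]

/-- The two structure maps of the amalgam, as a `Bool`-indexed family of homomorphisms. -/
def amalgMaps (f₁ : S →* Γ₁) (f₂ : S →* Γ₂) : ∀ b : Bool, S →* AmalgFam Γ₁ Γ₂ b
  | true => f₁
  | false => f₂

/-- The amalgamated free product `Γ₁ *_S Γ₂` along `f₁ : S →* Γ₁` and `f₂ : S →* Γ₂`,
realized as the pushout. -/
abbrev AmalgProd (f₁ : S →* Γ₁) (f₂ : S →* Γ₂) : Type _ :=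
  Monoid.PushoutI (amalgMaps f₁ f₂)

/-- The canonical map `Γ₁ →* Γ₁ *_S Γ₂`. -/
abbrev amalgInl (f₁ : S →* Γ₁) (f₂ : S →* Γ₂) : Γ₁ →* AmalgProd f₁ f₂ :=
  Monoid.PushoutI.of (φ := amalgMaps f₁ f₂) true

/-- The canonical map `Γ₂ →* Γ₁ *_S Γ₂`. -/
abbrev amalgInr (f₁ : S →* Γ₁) (f₂ : S →* Γ₂) : Γ₂ →* AmalgProd f₁ f₂ :=
  Monoid.PushoutI.of (φ := amalgMaps f₁ f₂) false

end AmalgamSetup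


open Monoid Monoid.PushoutI Monoid.CoprodI Function

section Aux

variable {ι : Type*} {G : ι → Type*} [∀ i, Group (G i)] {H : Type*} [Group H]
  {φ : ∀ i, H →* G i}

/-- Nontrivial transversal elements are not in the range. -/
lemma aux_transversal_not_mem_range (d : Monoid.PushoutI.NormalWord.Transversal φ) {i : ι} {g : G i}
    (hg : g ∈ d.set i) (hg1 : g ≠ 1) : g ∉ (φ i).range := by
  intro hmem
  have a := (Subgroup.IsComplement.equiv_snd_eq_self_iff_mem (d.compl i)
    (Subgroup.one_mem _)).2 hg
  have b := (Subgroup.IsComplement.coe_equiv_snd_eq_one_iff_mem (d.compl i)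
    (d.one_mem i)).2 hmem
  exact hg1 (a ▸ b)

/-- Decomposition: every `g` is `s * ofCoprodI w.prod` with `s ∈ (of i).range` and `w`
reduced with first index not `i`. -/
lemma aux_decomp (hφ : ∀ i, Injective (φ i)) (g : PushoutI φ) (i : ι) :
    ∃ (s : PushoutI φ) (w : Word G), Reduced φ w ∧ w.fstIdx ≠ some i ∧
      s ∈ (PushoutI.of (φ := φ) i).range ∧ g = s * ofCoprodI w.prod := by
  classical
  obtain ⟨d⟩ := Monoid.PushoutI.NormalWord.transversal_nonempty φ hφ
  set W : NormalWord d := Monoid.PushoutI.NormalWord.equiv g with hW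
  have hprod : W.prod = g :=
    (Monoid.PushoutI.NormalWord.equiv (φ := φ) (d := d)).symm_apply_apply g
  have hg : g = PushoutI.base φ W.head * ofCoprodI W.toWord.prod := by
    rw [← hprod]; rfl
  have hred : Reduced φ W.toWord := fun l hl =>
    aux_transversal_not_mem_range d (W.normalized l.1 l.2 hl) (W.ne_one l hl)
  rcases hl : W.toWord.toList with _ | ⟨⟨j, g₁⟩, rest⟩
  · refine ⟨PushoutI.base φ W.head, W.toWord, hred, ?_, ?_, hg⟩
    · simp [Word.fstIdx, hl]
    · exact ⟨φ i W.head, PushoutI.of_apply_eq_base φ i W.head⟩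
  · by_cases hji : j = i
    · subst hji
      -- peel first letter
      refine ⟨PushoutI.base φ W.head * PushoutI.of (φ := φ) j g₁,
        ⟨rest, fun l hl' => W.toWord.ne_one l (hl ▸ List.mem_cons_of_mem _ hl'),
          (hl ▸ W.toWord.chain_ne).tail⟩, ?_, ?_, ?_, ?_⟩
      · intro l hl'
        exact hred l (hl ▸ List.mem_cons_of_mem _ hl')
      · have hch := hl ▸ W.toWord.chain_ne
        rw [List.isChain_cons] at hch
        simp only [Word.fstIdx]
        intro hcon
        obtain ⟨b, hb, hbfst⟩ := Option.map_eq_some_iff.1 hcon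
        exact hch.1 b hb (by simp [hbfst])
      · exact Subgroup.mul_mem _ ⟨φ j W.head, PushoutI.of_apply_eq_base φ j W.head⟩ ⟨g₁, rfl⟩
      · rw [hg]
        simp only [Word.prod, hl, List.map_cons, List.prod_cons, map_mul, ofCoprodI_of, mul_assoc]
    · refine ⟨PushoutI.base φ W.head, W.toWord, hred, ?_, ?_, hg⟩
      · simp [Word.fstIdx, hl, Option.map_eq_some_iff, hji]
      · exact ⟨φ i W.head, PushoutI.of_apply_eq_base φ i W.head⟩

/-- If a reduced word's image lies in `(of j).range` then its index list is `[]` or `[j]`. -/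
lemma aux_reduced_mem_of_range (hφ : ∀ i, Injective (φ i)) {w : Word G} (hw : Reduced φ w)
    {j : ι} (h : ofCoprodI w.prod ∈ (PushoutI.of (φ := φ) j).range) :
    w.toList.map Sigma.fst = [] ∨ w.toList.map Sigma.fst = [j] := by
  classical
  obtain ⟨d⟩ := Monoid.PushoutI.NormalWord.transversal_nonempty φ hφ
  obtain ⟨g, hg⟩ := h
  by_cases hgr : g ∈ (φ j).range
  · obtain ⟨t, rfl⟩ := hgr
    left
    have := hw.eq_empty_of_mem_range hφ
      (hg ▸ ⟨t, (PushoutI.of_apply_eq_base φ j t).symm⟩)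
    simp [this, Word.empty]
  · right
    have hg1 : g ≠ 1 := fun h1 => hgr (h1 ▸ Subgroup.one_mem _)
    let u : Word G := ⟨[⟨j, g⟩], by simpa using hg1, List.isChain_singleton _⟩
    have hu : Reduced φ u := by
      intro l hl
      simp only [u, List.mem_singleton] at hl
      subst hl; exact hgr
    obtain ⟨w₁, hw₁p, hw₁l⟩ := hw.exists_normalWord_prod_eq d
    obtain ⟨w₂, hw₂p, hw₂l⟩ := hu.exists_normalWord_prod_eq d
    have hup : ofCoprodI u.prod = PushoutI.of (φ := φ) j g := by
      simp [u, Word.prod]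
    have : w₁ = w₂ := Monoid.PushoutI.NormalWord.prod_injective
      (by rw [hw₁p, hw₂p, hup, hg])
    rw [hw₁l.symm.trans (this ▸ hw₂l)]
    rfl

/-- Conjugating a non-base element of `G i` by a reduced word not starting with `i`. -/
lemma aux_conj_word (hφ : ∀ i, Injective (φ i)) {w : Word G} (hw : Reduced φ w)
    {i : ι} (hfst : w.fstIdx ≠ some i) {c : G i} (hc : c ∉ (φ i).range) :
    ∃ w' : Word G, Reduced φ w' ∧
      w'.toList.map Sigma.fst
        = (w.toList.map Sigma.fst).reverse ++ i :: w.toList.map Sigma.fst ∧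
      ofCoprodI w'.prod = (ofCoprodI w.prod)⁻¹ * PushoutI.of (φ := φ) i c * ofCoprodI w.prod := by
  classical
  have hc1 : c ≠ 1 := fun h1 => hc (h1 ▸ Subgroup.one_mem _)
  have hhead : ∀ b ∈ w.toList.head?, i ≠ b.1 := Word.fstIdx_ne_iff.1 hfst
  refine ⟨⟨w.toList.reverse.map (fun l => ⟨l.1, l.2⁻¹⟩) ++ ⟨i, c⟩ :: w.toList, ?_, ?_⟩, ?_, ?_, ?_⟩
  · intro l hl
    rcases List.mem_append.1 hl with hl | hl
    · obtain ⟨a, ha, rfl⟩ := List.mem_map.1 hl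
      simpa using inv_ne_one.2 (w.ne_one a (List.mem_reverse.1 ha))
    · rcases List.mem_cons.1 hl with rfl | hl
      · exact hc1
      · exact w.ne_one l hl
  · rw [List.isChain_append]
    refine ⟨?_, ?_, ?_⟩
    · rw [List.isChain_map, List.isChain_reverse]
      exact List.IsChain.imp (fun a b h => Ne.symm h) w.chain_ne
    · rw [List.isChain_cons]
      exact ⟨fun b hb => hhead b hb, w.chain_ne⟩
    · intro x hx y hy
      rw [List.head?_cons, Option.mem_some_iff] at hy
      subst hy
      simp only [List.map_reverse, List.getLast?_reverse, List.head?_map] at hx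
      obtain ⟨a, ha, rfl⟩ := Option.map_eq_some_iff.1 (Option.mem_def.1 hx)
      exact fun h => hhead a ha h.symm
  · intro l hl
    rcases List.mem_append.1 hl with hl | hl
    · obtain ⟨a, ha, rfl⟩ := List.mem_map.1 hl
      simpa using fun h => hw a (List.mem_reverse.1 ha) ((Subgroup.inv_mem_iff _).1 h)
    · rcases List.mem_cons.1 hl with rfl | hl
      · exact hc
      · exact hw l hl
  · simp [List.map_append, List.map_reverse, List.map_map, Function.comp_def]
  · have hinv : (List.map (fun l : Σ i, G i => CoprodI.of (M := G) l.2⁻¹)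
        w.toList.reverse).prod = (Word.prod w)⁻¹ := by
      rw [Word.prod, List.prod_inv_reverse, List.map_map, ← List.map_reverse]
      exact congrArg List.prod (List.map_congr_left fun a _ => by simp)
    simp only [Word.prod, List.map_append, List.prod_append, List.map_cons, List.prod_cons,
      List.map_map]
    rw [show ((fun l : Σ i, G i => CoprodI.of (M := G) l.2) ∘ fun l : Σ i, G i =>
      (⟨l.1, l.2⁻¹⟩ : Σ i, G i)) = fun l : Σ i, G i => CoprodI.of (M := G) l.2⁻¹ from rfl, hinv]
    simp [Word.prod, mul_assoc]

/-- The key conjugation lemma. -/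
lemma aux_key (hφ : ∀ i, Injective (φ i)) (i j : ι) (g : PushoutI φ)
    (hg : j = i → g ∉ (PushoutI.of (φ := φ) i).range) :
    ∃ s ∈ (PushoutI.of (φ := φ) i).range,
      ∀ y : PushoutI φ, y ∈ (PushoutI.of (φ := φ) i).range →
        g⁻¹ * y * g ∈ (PushoutI.of (φ := φ) j).range →
        s⁻¹ * y * s ∈ (PushoutI.base φ).range := by
  obtain ⟨s, w, hred, hfst, hs, rfl⟩ := aux_decomp hφ g i
  refine ⟨s, hs, fun y hy hconj => ?_⟩
  by_contra hz
  have hzr : s⁻¹ * y * s ∈ (PushoutI.of (φ := φ) i).range :=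
    Subgroup.mul_mem _ (Subgroup.mul_mem _ (Subgroup.inv_mem _ hs) hy) hs
  obtain ⟨c, hc⟩ := hzr
  have hcr : c ∉ (φ i).range := by
    rintro ⟨t, rfl⟩
    exact hz (hc ▸ ⟨t, (PushoutI.of_apply_eq_base φ i t).symm⟩)
  obtain ⟨w', hred', hlist', hprod'⟩ := aux_conj_word hφ hred hfst hcr
  have hconj' : ofCoprodI w'.prod ∈ (PushoutI.of (φ := φ) j).range := by
    rw [hprod', hc]
    convert hconj using 1
    group
  rcases aux_reduced_mem_of_range hφ hred' hconj' with h | h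
  · rw [hlist'] at h
    simp at h
  · rw [hlist'] at h
    have hlen := congrArg List.length h
    have hw0 : w.toList.length = 0 := by
      simp only [List.length_append, List.length_reverse, List.length_cons,
        List.length_map, List.length_nil] at hlen
      omega
    have hwnil : w.toList = [] := List.length_eq_zero_iff.1 hw0
    rw [hwnil] at h
    simp only [List.map_nil, List.reverse_nil, List.nil_append] at h
    have hij : i = j := by simpa using h
    have hone : ofCoprodI (φ := φ) w.prod = 1 := by
      have hp : w.prod = 1 := by simp [Word.prod, hwnil]
      rw [hp, map_one]
    exact hg hij.symm (by rw [hone, mul_one]; exact hs)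

lemma aux_malnormal (hφ : ∀ i, Injective (φ i)) [Finite H] (i : ι) (g : PushoutI φ)
    (hg : g ∉ (PushoutI.of (φ := φ) i).range) :
    {y : PushoutI φ | y ∈ (PushoutI.of (φ := φ) i).range ∧
      g * y * g⁻¹ ∈ (PushoutI.of (φ := φ) i).range}.Finite := by
  have hginv : g⁻¹ ∉ (PushoutI.of (φ := φ) i).range := fun h => hg (by
    have := Subgroup.inv_mem _ h
    simpa using this)
  obtain ⟨s, hs, hmain⟩ := aux_key hφ i i g⁻¹ (fun _ => hginv)
  apply Set.Finite.subset (Set.finite_range (fun t : H => s * PushoutI.base φ t * s⁻¹))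
  rintro y ⟨hy, hconj⟩
  obtain ⟨t, ht⟩ := hmain y hy (by simpa using hconj)
  exact ⟨t, show s * PushoutI.base φ t * s⁻¹ = y by rw [ht]; group⟩

end Aux


/-- **Example 2.6 (2).**  Let `Γ = Γ₁ *_S Γ₂` be a non-trivial amalgamated free product
(`f₁ : S →* Γ₁`, `f₂ : S →* Γ₂` injective and non-surjective), with `Γ₁`, `Γ₂` and `S`
identified with their canonical images in `Γ`.  Then:
(i) for each `i = 1, 2` and every `g ∈ Γ \ Γᵢ` there is `s ∈ Γᵢ` with
`gΓᵢg⁻¹ ∩ Γᵢ ⊆ sSs⁻¹` (in particular `Γᵢ` is almost malnormal in `Γ` when `S` is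
finite); (ii) for every `g ∈ Γ` there is `s ∈ Γ₁` with `gΓ₂g⁻¹ ∩ Γ₁ ⊆ sSs⁻¹`. -/
theorem amalgamated_product_conj_intersections
    {Γ₁ Γ₂ S : Type} [Group Γ₁] [Group Γ₂] [Group S]
    (f₁ : S →* Γ₁) (f₂ : S →* Γ₂)
    (hf₁ : Function.Injective f₁) (hf₂ : Function.Injective f₂)
    (hnt₁ : ¬ Function.Surjective f₁) (hnt₂ : ¬ Function.Surjective f₂) :
    -- (i) for `Γ₁`:
    ((∀ g : AmalgProd f₁ f₂, g ∉ (amalgInl f₁ f₂).range →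
      ∃ s ∈ (amalgInl f₁ f₂).range,
        ∀ y : AmalgProd f₁ f₂, y ∈ (amalgInl f₁ f₂).range →
          g⁻¹ * y * g ∈ (amalgInl f₁ f₂).range →
          s⁻¹ * y * s ∈ (Monoid.PushoutI.base (amalgMaps f₁ f₂)).range) ∧
    -- (i) for `Γ₂`:
    (∀ g : AmalgProd f₁ f₂, g ∉ (amalgInr f₁ f₂).range →
      ∃ s ∈ (amalgInr f₁ f₂).range,
        ∀ y : AmalgProd f₁ f₂, y ∈ (amalgInr f₁ f₂).range →
          g⁻¹ * y * g ∈ (amalgInr f₁ f₂).range →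
          s⁻¹ * y * s ∈ (Monoid.PushoutI.base (amalgMaps f₁ f₂)).range) ∧
    -- (i), `In particular`: almost malnormality when `S` is finite:
    (Finite S →
      (∀ g : AmalgProd f₁ f₂, g ∉ (amalgInl f₁ f₂).range →
        {y : AmalgProd f₁ f₂ | y ∈ (amalgInl f₁ f₂).range ∧
          g * y * g⁻¹ ∈ (amalgInl f₁ f₂).range}.Finite) ∧
      (∀ g : AmalgProd f₁ f₂, g ∉ (amalgInr f₁ f₂).range →
        {y : AmalgProd f₁ f₂ | y ∈ (amalgInr f₁ f₂).range ∧
          g * y * g⁻¹ ∈ (amalgInr f₁ f₂).range}.Finite))) ∧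
    -- (ii):
    (∀ g : AmalgProd f₁ f₂,
      ∃ s ∈ (amalgInl f₁ f₂).range,
        ∀ y : AmalgProd f₁ f₂, y ∈ (amalgInl f₁ f₂).range →
          g⁻¹ * y * g ∈ (amalgInr f₁ f₂).range →
          s⁻¹ * y * s ∈ (Monoid.PushoutI.base (amalgMaps f₁ f₂)).range) := by
  classical
  have hφ : ∀ b, Function.Injective ⇑(amalgMaps f₁ f₂ b) := by
    intro b; cases b
    · exact hf₂
    · exact hf₁
  refine ⟨⟨?_, ?_, ?_⟩, ?_⟩
  · intro g hg
    exact aux_key hφ true true g (fun _ => hg)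
  · intro g hg
    exact aux_key hφ false false g (fun _ => hg)
  · intro hS
    exact ⟨fun g hg => aux_malnormal hφ true g hg, fun g hg => aux_malnormal hφ false g hg⟩
  · intro g
    exact aux_key hφ true false g (fun h => absurd h Bool.false_ne_true)
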